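/- Tweedie's formula: let X be an ℝⁿ-valued random variable with distribution p_X, ε ~ N(0, σ²I) independent of X, and Z = X + ε with marginal density p_Z = p_X * N(0,σ²I). Then the conditional expectation ψ_σ(z) := E[X | Z = z] satisfies ψ_σ(z) = z + σ² ∇ log p_Z(z) for all z with p_Z(z) > 0. -/

import Mathlib

open scoped RealInnerProductSpace
open Filter Topology MeasureTheory

noncomputable section

/-- Density of the centered Gaussian `N(0, σ²I)` on `ℝⁿ`. -/
def gaussPdf (n : ℕ) (σ : ℝ) (v : EuclideanSpace ℝ (Fin n)) : ℝ :=
  (2 * Real.pi * σ ^ 2) ^ (-(n : ℝ) / 2) * Real.exp (-‖v‖ ^ 2 / (2 * σ ^ 2))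

variable {n : ℕ}

lemma gauss_cont (σ : ℝ) : Continuous (gaussPdf n σ) := by
  unfold gaussPdf; fun_prop

lemma gauss_pos (σ : ℝ) (hσ : 0 < σ) (v : EuclideanSpace ℝ (Fin n)) : 0 < gaussPdf n σ v := by
  unfold gaussPdf; positivity

lemma gauss_le (σ : ℝ) (hσ : 0 < σ) (v : EuclideanSpace ℝ (Fin n)) :
    gaussPdf n σ v ≤ (2 * Real.pi * σ ^ 2) ^ (-(n : ℝ) / 2) := by
  unfold gaussPdf
  have h : Real.exp (-‖v‖ ^ 2 / (2 * σ ^ 2)) ≤ 1 := by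
    rw [Real.exp_le_one_iff]
    have : 0 ≤ ‖v‖ ^ 2 / (2 * σ ^ 2) := by positivity
    linarith [neg_div (2 * σ ^ 2) (‖v‖ ^ 2)]
  nlinarith [Real.rpow_pos_of_pos (by positivity : (0:ℝ) < 2 * Real.pi * σ ^ 2) (-(n : ℝ) / 2)]

lemma texp_le (σ : ℝ) (hσ : 0 < σ) (t : ℝ) (ht : 0 ≤ t) :
    t * Real.exp (-t ^ 2 / (2 * σ ^ 2)) ≤ σ := by
  have hs : (0:ℝ) ≤ t ^ 2 / (2 * σ ^ 2) := by positivity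
  have h1 : 1 + t ^ 2 / (2 * σ ^ 2) ≤ Real.exp (t ^ 2 / (2 * σ ^ 2)) := by
    have := Real.add_one_le_exp (t ^ 2 / (2 * σ ^ 2)); linarith
  have h2 : Real.exp (-t ^ 2 / (2 * σ ^ 2)) = (Real.exp (t ^ 2 / (2 * σ ^ 2)))⁻¹ := by
    rw [← Real.exp_neg]; ring_nf
  rw [h2]
  rw [mul_inv_le_iff₀ (Real.exp_pos _)]
  have h3 : t ≤ σ * (1 + t ^ 2 / (2 * σ ^ 2)) := by
    have h4 : σ * (1 + t ^ 2 / (2 * σ ^ 2)) - t = ((t - σ) ^ 2 + σ ^ 2) / (2 * σ) := by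
      field_simp; ring
    rw [← sub_nonneg, h4]
    positivity
  calc t ≤ σ * (1 + t ^ 2 / (2 * σ ^ 2)) := h3
    _ ≤ σ * Real.exp (t ^ 2 / (2 * σ ^ 2)) := by
        exact mul_le_mul_of_nonneg_left h1 hσ.le

lemma gauss_hasFDerivAt (σ : ℝ) (hσ : 0 < σ) (x z : EuclideanSpace ℝ (Fin n)) :
    HasFDerivAt (fun w => gaussPdf n σ (w - x))
      (innerSL ℝ (((σ ^ 2)⁻¹ * gaussPdf n σ (z - x)) • (x - z))) z := by
  have h1 : HasFDerivAt (fun w : EuclideanSpace ℝ (Fin n) => w - x)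
      (ContinuousLinearMap.id ℝ _) z := (hasFDerivAt_id z).sub_const x
  have h2 : HasFDerivAt (fun w : EuclideanSpace ℝ (Fin n) => ‖w - x‖ ^ 2)
      (2 • (innerSL ℝ (z - x))) z := by
    simpa using h1.norm_sq
  have h3 := h2.const_mul (-(2 * σ ^ 2)⁻¹)
  have h4 := (h3.exp).const_mul ((2 * Real.pi * σ ^ 2) ^ (-(n : ℝ) / 2))
  have hne : (σ:ℝ) ^ 2 ≠ 0 := by positivity
  convert h4 using 1
  · rfl
  · rfl
  · rfl
  · ext w
    simp [gaussPdf, neg_div, div_eq_inv_mul, neg_mul]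
  · ext v
    simp only [ContinuousLinearMap.smul_apply, innerSL_apply_apply, smul_eq_mul,
      ContinuousLinearMap.coe_smul', Pi.smul_apply, gaussPdf]
    rw [inner_smul_left, show (x - z : EuclideanSpace ℝ (Fin n)) = -(z - x) by abel,
      inner_neg_left]
    simp only [map_mul, conj_trivial, neg_div, div_eq_inv_mul, neg_mul, mul_inv]
    ring_nf

/-- Marginal density of `Z = X + ε` where `X ~ μ` and `ε ~ N(0, σ²I)`. -/
def pZ (n : ℕ) (σ : ℝ) (μ : Measure (EuclideanSpace ℝ (Fin n)))
    (z : EuclideanSpace ℝ (Fin n)) : ℝ :=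
  ∫ x, gaussPdf n σ (z - x) ∂μ

/-- MMSE denoiser `ψ_σ(z) = E[X | Z = z]`. -/
def mmse (n : ℕ) (σ : ℝ) (μ : Measure (EuclideanSpace ℝ (Fin n)))
    (z : EuclideanSpace ℝ (Fin n)) : EuclideanSpace ℝ (Fin n) :=
  (pZ n σ μ z)⁻¹ • ∫ x, gaussPdf n σ (z - x) • x ∂μ

set_option maxHeartbeats 1000000 in
/-- Tweedie's formula: `ψ_σ(z) = z + σ² ∇ log p_Z(z)` wherever `p_Z(z) > 0`. -/
theorem stmt_7 {n : ℕ} (σ : ℝ) (hσ : 0 < σ)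
    (μ : Measure (EuclideanSpace ℝ (Fin n))) [IsProbabilityMeasure μ]
    (hmom : Integrable (fun x => x) μ) :
    ∀ z, 0 < pZ n σ μ z →
      HasGradientAt (fun w => Real.log (pZ n σ μ w))
        ((1 / σ ^ 2) • (mmse n σ μ z - z)) z := by
  intro z hz
  set C : ℝ := (2 * Real.pi * σ ^ 2) ^ (-(n : ℝ) / 2) with hC
  have hCpos : 0 < C := Real.rpow_pos_of_pos (by positivity) _
  have hσ2 : (0:ℝ) < σ ^ 2 := by positivity
  -- the vector integrand and its integrability
  set g : EuclideanSpace ℝ (Fin n) → EuclideanSpace ℝ (Fin n) := fun x => ((σ ^ 2)⁻¹ * gaussPdf n σ (z - x)) • (x - z) with hg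
  have hmeas_gauss : ∀ w : EuclideanSpace ℝ (Fin n),
      AEStronglyMeasurable (fun x : EuclideanSpace ℝ (Fin n) => gaussPdf n σ (w - x)) μ :=
    fun w => ((gauss_cont σ).comp (continuous_const.sub continuous_id)).aestronglyMeasurable
  have hint_gauss : Integrable (fun x : EuclideanSpace ℝ (Fin n) => gaussPdf n σ (z - x)) μ := by
    refine (integrable_const C).mono' (hmeas_gauss z) ?_
    filter_upwards with x
    rw [Real.norm_eq_abs, abs_of_pos (gauss_pos σ hσ _)]
    exact gauss_le σ hσ _
  have hmeas_g : AEStronglyMeasurable g μ := by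
    refine AEStronglyMeasurable.fun_smul ?_ ?_
    · exact (continuous_const.mul ((gauss_cont σ).comp
        (continuous_const.sub continuous_id))).aestronglyMeasurable
    · exact (continuous_id.sub continuous_const).aestronglyMeasurable
  have hint_gx : Integrable (fun x : EuclideanSpace ℝ (Fin n) => gaussPdf n σ (z - x) • x) μ := by
    refine (hmom.norm.const_mul C).mono' ?_ ?_
    · exact AEStronglyMeasurable.smul ((gauss_cont σ).comp
        (continuous_const.sub continuous_id)).aestronglyMeasurable hmom.1
    · filter_upwards with x
      rw [norm_smul, Real.norm_eq_abs, abs_of_pos (gauss_pos σ hσ _)]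
      exact mul_le_mul_of_nonneg_right (gauss_le σ hσ _) (norm_nonneg _)
  have hint_g : Integrable g μ := by
    have h1 : Integrable (fun x : EuclideanSpace ℝ (Fin n) => gaussPdf n σ (z - x) • (x - z)) μ := by
      have := hint_gx.sub (hint_gauss.smul_const z)
      refine this.congr ?_
      filter_upwards with x
      simp [Pi.sub_apply, smul_sub]
    have := h1.smul ((σ ^ 2)⁻¹)
    refine this.congr ?_
    filter_upwards with x
    simp [g, smul_smul]
  -- differentiate under the integral sign
  have hderiv : HasFDerivAt (pZ n σ μ) (∫ x, innerSL ℝ (g x) ∂μ) z := by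
    have := hasFDerivAt_integral_of_dominated_of_fderiv_le
      (F := fun w x => gaussPdf n σ (w - x))
      (F' := fun w x => innerSL ℝ (((σ ^ 2)⁻¹ * gaussPdf n σ (w - x)) • (x - w)))
      (x₀ := z) (bound := fun _ => (σ ^ 2)⁻¹ * C * σ) (μ := μ)
      (Metric.ball_mem_nhds z one_pos)
      (Filter.Eventually.of_forall fun w => hmeas_gauss w)
      hint_gauss
      ?_ ?_ (integrable_const _) ?_
    · exact this
    · refine Continuous.aestronglyMeasurable ?_
      exact (innerSL ℝ).continuous.comp
        (((continuous_const.mul ((gauss_cont σ).comp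
          (continuous_const.sub continuous_id)))).smul
          (continuous_id.sub continuous_const))
    · filter_upwards with x
      intro w hw
      have h1 : ‖innerSL ℝ (((σ ^ 2)⁻¹ * gaussPdf n σ (w - x)) • (x - w))‖
          = ((σ ^ 2)⁻¹ * gaussPdf n σ (w - x)) * ‖x - w‖ := by
        rw [innerSL_apply_norm, norm_smul, Real.norm_eq_abs, abs_of_pos]
        exact mul_pos (by positivity) (gauss_pos σ hσ _)
      rw [h1]
      have h2 : ‖x - w‖ = ‖w - x‖ := by rw [← norm_neg]; congr 1; abel
      rw [h2]
      have h3 : gaussPdf n σ (w - x) * ‖w - x‖ ≤ C * σ := by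
        unfold gaussPdf
        rw [mul_comm, ← mul_assoc, mul_comm (‖w-x‖) _, mul_assoc]
        exact mul_le_mul_of_nonneg_left (texp_le σ hσ _ (norm_nonneg _)) hCpos.le
      calc (σ ^ 2)⁻¹ * gaussPdf n σ (w - x) * ‖w - x‖
          = (σ ^ 2)⁻¹ * (gaussPdf n σ (w - x) * ‖w - x‖) := by ring
        _ ≤ (σ ^ 2)⁻¹ * (C * σ) := by
            exact mul_le_mul_of_nonneg_left h3 (by positivity)
        _ = (σ ^ 2)⁻¹ * C * σ := by ring
    · filter_upwards with x
      intro w hw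
      exact gauss_hasFDerivAt σ hσ x w
  -- rewrite the derivative as innerSL of a vector
  have hcomm : (∫ x, innerSL ℝ (g x) ∂μ) = innerSL ℝ (∫ x, g x ∂μ) :=
    ContinuousLinearMap.integral_comp_comm (innerSL ℝ) hint_g
  rw [hcomm] at hderiv
  -- gradient of log
  have hne : pZ n σ μ z ≠ 0 := ne_of_gt hz
  have hlog := hderiv.log hne
  have hlog' : HasFDerivAt (fun w => Real.log (pZ n σ μ w))
      (innerSL ℝ ((pZ n σ μ z)⁻¹ • ∫ x, g x ∂μ)) z := by
    rw [_root_.map_smul]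
    exact hlog
  have hA : (∫ x, g x ∂μ)
      = (σ ^ 2)⁻¹ • ((∫ x, gaussPdf n σ (z - x) • x ∂μ) - (pZ n σ μ z) • z) := by
    have e1 : (fun x => g x)
        = fun x => (σ ^ 2)⁻¹ • (gaussPdf n σ (z - x) • (x - z) : EuclideanSpace ℝ (Fin n)) := by
      funext x; simp [g, smul_smul]
    rw [e1, integral_smul]
    congr 1
    have e2 : (fun x : EuclideanSpace ℝ (Fin n) => gaussPdf n σ (z - x) • (x - z))
        = fun x : EuclideanSpace ℝ (Fin n) =>
            gaussPdf n σ (z - x) • x - gaussPdf n σ (z - x) • z := by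
      funext x; rw [smul_sub]
    rw [e2, integral_sub hint_gx (hint_gauss.smul_const z), integral_smul_const]
    rfl
  have hvec : (1 / σ ^ 2) • (mmse n σ μ z - z) = (pZ n σ μ z)⁻¹ • ∫ x, g x ∂μ := by
    rw [hA, mmse, smul_comm ((pZ n σ μ z)⁻¹) ((σ ^ 2)⁻¹), one_div]
    congr 1
    rw [smul_sub, smul_smul, inv_mul_cancel₀ hne, one_smul]
  rw [hasGradientAt_iff_hasFDerivAt, hvec]
  have htd : (InnerProductSpace.toDual ℝ (EuclideanSpace ℝ (Fin n)))
      ((pZ n σ μ z)⁻¹ • ∫ x, g x ∂μ)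
      = innerSL ℝ ((pZ n σ μ z)⁻¹ • ∫ x, g x ∂μ) := by
    ext w
    simp [InnerProductSpace.toDual_apply_apply]
  rw [htd]
  exact hlog'
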